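/- (Soundness direction of Armstrong completeness, counterexample construction) Let T be a set of dependence atoms over variables V, and let y⃗, x⃗ ⊆ V. Let z⃗ = { z ∈ V : =(y⃗,{z}) is derivable from T by Armstrong's axioms }, and suppose x ∈ x⃗ with x ∉ z⃗. Define the two-element team X = {s, s'} over domain {0,1} by: s(v) = s'(v) = 0 for v ∈ z⃗, and s(v)=0, s'(v)=1 for v ∉ z⃗. Then X satisfies every atom of T but X does not satisfy =(y⃗,x⃗). -/

import Mathlib

/-- `agrees s s' w`: assignments `s` and `s'` agree on all variables in `w`. -/
def agrees {V M : Type*} (s s' : V → M) (w : Set V) : Prop := ∀ v ∈ w, s v = s' v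

/-- The team `X` satisfies the functional dependence atom `=(y,x)`. -/
def depAtom {V M : Type*} (X : Set (V → M)) (y x : Set V) : Prop :=
  ∀ s ∈ X, ∀ s' ∈ X, agrees s s' y → agrees s s' x

/-- The team `X` satisfies the conditional independence atom `y ⊥_x z`. -/
def condIndep {V M : Type*} (X : Set (V → M)) (y x z : Set V) : Prop :=
  ∀ s ∈ X, ∀ s' ∈ X, agrees s s' x →
    ∃ s'' ∈ X, agrees s'' s x ∧ agrees s'' s y ∧ agrees s'' s' z

/-- The team `X` satisfies the independence atom `a ⊥ b` (single variables). -/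
def indepAtom {V M : Type*} (X : Set (V → M)) (a b : V) : Prop :=
  ∀ s ∈ X, ∀ s' ∈ X, ∃ s'' ∈ X, s'' b = s b ∧ s'' a = s' a

/-- Derivability of dependence atoms from a set `T` of atoms by Armstrong's axioms. -/
inductive ArmDeriv {V : Type*} [DecidableEq V] (T : Set (Finset V × Finset V)) :
    Finset V → Finset V → Prop
  | mem (y x : Finset V) (h : (y, x) ∈ T) : ArmDeriv T y x
  | refl (x : Finset V) : ArmDeriv T x x
  | aug (y z x : Finset V) (hyz : y ⊆ z) (h : ArmDeriv T y x) : ArmDeriv T z x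
  | union (y x₁ x₂ : Finset V) (h₁ : ArmDeriv T y x₁) (h₂ : ArmDeriv T y x₂) :
      ArmDeriv T y (x₁ ∪ x₂)
  | trans (y z x : Finset V) (h₁ : ArmDeriv T y z) (h₂ : ArmDeriv T z x) : ArmDeriv T y x


lemma armSub {V : Type*} [DecidableEq V] (T : Set (Finset V × Finset V))
    (y x : Finset V) (hxy : x ⊆ y) : ArmDeriv T y x :=
  ArmDeriv.aug x y x hxy (ArmDeriv.refl x)

lemma armOfSingles {V : Type*} [DecidableEq V] (T : Set (Finset V × Finset V))
    (y a : Finset V) (h : ∀ v ∈ a, ArmDeriv T y {v}) : ArmDeriv T y a := by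
  induction a using Finset.induction_on with
  | empty => exact armSub T y ∅ (Finset.empty_subset y)
  | insert v a0 hni ih =>
    have : insert v a0 = {v} ∪ a0 := Finset.insert_eq v a0
    rw [this]
    exact ArmDeriv.union y {v} a0 (h v (by simp)) (ih fun w hw => h w (by simp [hw]))

open Classical in
theorem stmt6 {V : Type*} [DecidableEq V] (T : Set (Finset V × Finset V))
    (y xs : Finset V) (x : V) (hx : x ∈ xs)
    (hxz : ¬ ArmDeriv T y {x}) :
    let zset : Set V := {z | ArmDeriv T y {z}}
    let s : V → Fin 2 := fun _ => 0
    let s' : V → Fin 2 := fun v => if v ∈ zset then 0 else 1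
    let X : Set (V → Fin 2) := {s, s'}
    (∀ a ∈ T, depAtom X (↑a.1) (↑a.2)) ∧ ¬ depAtom X (↑y) (↑xs) := by
  intro zset s s' X
  have hyz : ∀ v ∈ y, (v : V) ∈ zset := fun v hv =>
    armSub T y {v} (Finset.singleton_subset_iff.mpr hv)
  have hxnz : x ∉ zset := hxz
  constructor
  · rintro ⟨a, b⟩ hab
    have main : (∀ v ∈ a, (v:V) ∈ zset) → ∀ w ∈ b, (w:V) ∈ zset := by
      intro hall w hw
      have h1 : ArmDeriv T y a := armOfSingles T y a hall
      have h2 : ArmDeriv T a b := ArmDeriv.mem a b hab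
      have h3 : ArmDeriv T b {w} := armSub T b {w} (Finset.singleton_subset_iff.mpr hw)
      exact ArmDeriv.trans y a {w} h1 (ArmDeriv.trans a b {w} h2 h3)
    intro t ht t' ht' hag w hw
    rcases ht with rfl | rfl <;> rcases ht' with rfl | rfl <;> try rfl
    · -- t = s, t' = s'
      have hall : ∀ v ∈ a, (v:V) ∈ zset := by
        intro v hv
        have := hag v (by simpa using hv)
        by_contra hvn
        simp [s, s', hvn] at this
      have := main hall w hw
      simp [s, s', this]
    · have hall : ∀ v ∈ a, (v:V) ∈ zset := by
        intro v hv
        have := hag v (by simpa using hv)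
        by_contra hvn
        simp [s, s', hvn] at this
      have := main hall w hw
      simp [s, s', this]
  · intro hdep
    have hag : agrees s s' ↑y := by
      intro v hv
      have := hyz v (by simpa using hv)
      simp [s, s', this]
    have := hdep s (Or.inl rfl) s' (Or.inr rfl) hag x (by simpa using hx)
    simp [s, s', hxnz] at this
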